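/- Let real-valued functions ctw^c satisfy the CTW recursion ctw^c_D(x) = (1/2)ξ_KT(x^c) + (1/2)ctw^{0c}_{D-1}(x)·ctw^{1c}_{D-1}(x) for D > 0 and ctw^c_0(x) = ξ_KT(x^c). Then for any complete proper suffix set S of depth ≤ D, ctw_D(x_{1:n}) ≥ 2^{-Γ_D(S)} ∏_{s∈S} ξ_KT(x^s_{1:n}), where Γ_D(S) is the description length of S and x^s denotes the subsequence of x matching context s. -/

import Mathlib

/-- Binary tree structures (PST structures / complete proper suffix sets). -/
inductive BTree where
  | leaf : BTree
  | node : BTree → BTree → BTree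
deriving DecidableEq

/-- Depth of a binary tree. -/
def BTree.depth : BTree → ℕ
  | .leaf => 0
  | .node l r => max l.depth r.depth + 1

/-- The CTW description length `Γ_D(T)`. -/
def BTree.cost : ℕ → BTree → ℕ
  | 0, _ => 0
  | _ + 1, .leaf => 1
  | D + 1, .node l r => 1 + l.cost D + r.cost D

/-- The contexts (suffixes) labelling the leaves of the tree rooted at context `c`:
left edges are labelled 1 (`true`) and right edges 0 (`false`). -/
def BTree.leafContexts : BTree → List Bool → List (List Bool)
  | .leaf, c => [c]
  | .node l r, c => l.leafContexts (true :: c) ++ r.leafContexts (false :: c)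

private lemma ctw_pos (ξ : List Bool → ℝ) (ctw : ℕ → List Bool → ℝ)
    (hpos : ∀ c, 0 < ξ c)
    (hbase : ∀ c, ctw 0 c = ξ c)
    (hrec : ∀ D c, ctw (D + 1) c =
      1/2 * ξ c + 1/2 * ctw D (false :: c) * ctw D (true :: c)) :
    ∀ D c, 0 < ctw D c := by
  intro D
  induction D with
  | zero => intro c; rw [hbase]; exact hpos c
  | succ n ih =>
    intro c
    rw [hrec]
    have := hpos c
    have h1 := ih (false :: c)
    have h2 := ih (true :: c)
    nlinarith

private lemma ctw_key (ξ : List Bool → ℝ) (ctw : ℕ → List Bool → ℝ)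
    (hpos : ∀ c, 0 < ξ c)
    (hbase : ∀ c, ctw 0 c = ξ c)
    (hrec : ∀ D c, ctw (D + 1) c =
      1/2 * ξ c + 1/2 * ctw D (false :: c) * ctw D (true :: c)) :
    ∀ (T : BTree) (D : ℕ) (c : List Bool), T.depth ≤ D →
      ((2 : ℝ) ^ T.cost D)⁻¹ * ((T.leafContexts c).map ξ).prod ≤ ctw D c := by
  intro T
  induction T with
  | leaf =>
    intro D c _
    cases D with
    | zero => simp [BTree.cost, BTree.leafContexts, hbase]
    | succ n =>
      simp only [BTree.cost, BTree.leafContexts, List.map_cons, List.map_nil,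
        List.prod_cons, List.prod_nil, pow_one, mul_one]
      rw [hrec]
      have h1 := ctw_pos ξ ctw hpos hbase hrec n (false :: c)
      have h2 := ctw_pos ξ ctw hpos hbase hrec n (true :: c)
      nlinarith
  | node l r ihl ihr =>
    intro D c hd
    cases D with
    | zero => exact absurd hd (by simp [BTree.depth])
    | succ n =>
      have hdl : l.depth ≤ n := by
        simp only [BTree.depth, Nat.succ_le_succ_iff] at hd
        exact le_trans (le_max_left _ _) hd
      have hdr : r.depth ≤ n := by
        simp only [BTree.depth, Nat.succ_le_succ_iff] at hd
        exact le_trans (le_max_right _ _) hd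
      have hl := ihl n (true :: c) hdl
      have hr := ihr n (false :: c) hdr
      simp only [BTree.cost, BTree.leafContexts, List.map_append, List.prod_append]
      rw [hrec]
      have hplξ : 0 < (((l.leafContexts (true :: c)).map ξ).prod) :=
        List.prod_pos (by intro x hx; obtain ⟨y, _, rfl⟩ := List.mem_map.mp hx; exact hpos y)
      have hprξ : 0 < (((r.leafContexts (false :: c)).map ξ).prod) :=
        List.prod_pos (by intro x hx; obtain ⟨y, _, rfl⟩ := List.mem_map.mp hx; exact hpos y)
      have key : ((2:ℝ) ^ (1 + l.cost n + r.cost n))⁻¹ *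
          ((((l.leafContexts (true :: c)).map ξ).prod) *
            (((r.leafContexts (false :: c)).map ξ).prod))
          ≤ 1/2 * ctw n (false :: c) * ctw n (true :: c) := by
        have e : ((2:ℝ) ^ (1 + l.cost n + r.cost n))⁻¹ *
            ((((l.leafContexts (true :: c)).map ξ).prod) *
              (((r.leafContexts (false :: c)).map ξ).prod))
            = 1/2 * (((2:ℝ) ^ r.cost n)⁻¹ * (((r.leafContexts (false :: c)).map ξ).prod)) *
              (((2:ℝ) ^ l.cost n)⁻¹ * (((l.leafContexts (true :: c)).map ξ).prod)) := by
          rw [pow_add, pow_add, pow_one]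
          field_simp
        rw [e]
        have hcr : 0 < ctw n (false :: c) := ctw_pos ξ ctw hpos hbase hrec n _
        have step1 : 1/2 * (((2:ℝ) ^ r.cost n)⁻¹ * (((r.leafContexts (false :: c)).map ξ).prod)) *
            (((2:ℝ) ^ l.cost n)⁻¹ * (((l.leafContexts (true :: c)).map ξ).prod)) ≤
            1/2 * ctw n (false :: c) *
              (((2:ℝ) ^ l.cost n)⁻¹ * (((l.leafContexts (true :: c)).map ξ).prod)) := by
          apply mul_le_mul_of_nonneg_right _ (by positivity)
          have := mul_le_mul_of_nonneg_left hr (by norm_num : (0:ℝ) ≤ 1/2)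
          linarith [this]
        have step2 : 1/2 * ctw n (false :: c) *
            (((2:ℝ) ^ l.cost n)⁻¹ * (((l.leafContexts (true :: c)).map ξ).prod)) ≤
            1/2 * ctw n (false :: c) * ctw n (true :: c) :=
          mul_le_mul_of_nonneg_left hl (by positivity)
        linarith
      have hξc := hpos c
      linarith

/-- The CTW lower bound (model redundancy): if `ctw` satisfies the CTW recursion
`ctw^c_D(x) = (1/2)ξ_KT(x^c) + (1/2)ctw^{0c}_{D-1}(x)·ctw^{1c}_{D-1}(x)` with base
case `ctw^c_0(x) = ξ_KT(x^c)`, and all `ξ_KT` values are positive, then for any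
complete proper suffix set `S` (given by a tree `T`) of depth ≤ D,
`ctw_D(x) ≥ 2^{-Γ_D(S)} ∏_{s∈S} ξ_KT(x^s)`. Here `ξ c` denotes `ξ_KT(x^c)`. -/
theorem ctw_model_redundancy (ξ : List Bool → ℝ) (ctw : ℕ → List Bool → ℝ)
    (hpos : ∀ c, 0 < ξ c)
    (hbase : ∀ c, ctw 0 c = ξ c)
    (hrec : ∀ D c, ctw (D + 1) c =
      1/2 * ξ c + 1/2 * ctw D (false :: c) * ctw D (true :: c))
    (T : BTree) (D : ℕ) (hdepth : T.depth ≤ D) :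
    ((2 : ℝ) ^ T.cost D)⁻¹ * ((T.leafContexts []).map ξ).prod ≤ ctw D [] :=
  ctw_key ξ ctw hpos hbase hrec T D [] hdepth
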